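/- Let T be a locally finite infinite rooted tree on which the simple random walk is recurrent, and let (ω_n)_{n∈ℕ} be a summable sequence of positive reals. Then the infimum over all cutsets Π separating the root from infinity of Σ_{e∈Π} ω_{|e|} is 0. -/

import Mathlib

open scoped ENNReal NNReal Classical

/-- A locally finite rooted tree, encoded by a parent function: every vertex eventually
reaches the root by iterating `parent`, and every vertex has finitely many children.
Non-root vertices are identified with the edge joining them to their parent. -/
structure GrowingTree where
  V : Type
  root : V
  parent : V → V
  parent_root : parent root = root
  reaches_root : ∀ v, ∃ n, parent^[n] v = root
  locallyFinite : ∀ v, {w | parent w = v ∧ w ≠ root}.Finite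

namespace GrowingTree

variable (T : GrowingTree)

/-- The children of a vertex. -/
noncomputable def children (v : T.V) : Finset T.V := (T.locallyFinite v).toFinset

/-- The depth (distance from the root) of a vertex. -/
noncomputable def depth (v : T.V) : ℕ := Nat.find (T.reaches_root v)

/-- A flow from the root to infinity: at every vertex the value (the flow through the
edge above the vertex, resp. the strength at the root) equals the total flow to the
children. -/
def IsFlow (θ : T.V → ℝ≥0) : Prop :=
  ∀ v, θ v = ∑ w ∈ T.children v, θ w

/-- The strength of a flow: the total outflow from the root. -/
def strength (θ : T.V → ℝ≥0) : ℝ≥0 := θ T.root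

/-- A flow respects the capacities `κ` if it is bounded by `κ` on every edge
(i.e. at every non-root vertex). -/
def Respects (θ : T.V → ℝ≥0) (κ : T.V → ℝ≥0) : Prop :=
  ∀ v, v ≠ T.root → θ v ≤ κ v

/-- The maximal flow from the root to infinity with respect to capacities `κ`. -/
noncomputable def maxFlow (κ : T.V → ℝ≥0) : ℝ≥0∞ :=
  ⨆ θ : {θ : T.V → ℝ≥0 // T.IsFlow θ ∧ T.Respects θ κ}, (T.strength θ.1 : ℝ≥0∞)

/-- An infinite self-avoiding path starting at the root. -/
def IsRay (r : ℕ → T.V) : Prop :=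
  r 0 = T.root ∧ ∀ n, T.parent (r (n + 1)) = r n ∧ r (n + 1) ≠ T.root

/-- A cutset separating the root from infinity: a set of edges (non-root vertices) met by
every infinite self-avoiding path starting at the root. -/
def IsCutset (C : Set T.V) : Prop :=
  T.root ∉ C ∧ ∀ r : ℕ → T.V, T.IsRay r → ∃ n, r (n + 1) ∈ C

/-- The total capacity of a cutset. -/
noncomputable def cutsetSum (κ : T.V → ℝ≥0) (C : Set T.V) : ℝ≥0∞ :=
  ∑' v : C, (κ v.1 : ℝ≥0∞)

/-- The minimum of the capacities along the path from the root to an edge (inclusive). -/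
noncomputable def minCap (κ : T.V → ℝ≥0) (v : T.V) : ℝ≥0 :=
  if h : v = T.root then κ v
  else
    (Finset.range (T.depth v)).inf'
      (by
        rw [Finset.nonempty_range_iff]
        intro h0
        apply h
        have hs : T.parent^[T.depth v] v = T.root := Nat.find_spec (T.reaches_root v)
        rw [h0] at hs
        simpa using hs)
      (fun k => κ (T.parent^[k] v))

/-- The energy of a flow. -/
noncomputable def energy (θ : T.V → ℝ≥0) : ℝ≥0∞ :=
  ∑' v : {v : T.V // v ≠ T.root}, ((θ v.1 : ℝ≥0∞)) ^ 2

end GrowingTree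
section Aux
open scoped ENNReal NNReal Classical

namespace GrowingTree
variable (T : GrowingTree)

lemma mem_children {T : GrowingTree} {v w : T.V} :
    w ∈ T.children v ↔ T.parent w = v ∧ w ≠ T.root := by
  simp [children, Set.Finite.mem_toFinset]

lemma iterate_depth (v : T.V) : T.parent^[T.depth v] v = T.root :=
  Nat.find_spec (T.reaches_root v)

lemma depth_eq_zero {T : GrowingTree} {v : T.V} : T.depth v = 0 ↔ v = T.root := by
  constructor
  · intro h
    have := T.iterate_depth v
    rwa [h, Function.iterate_zero_apply] at this
  · intro h
    subst h
    exact Nat.find_eq_zero _ |>.mpr (by simp)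

lemma depth_pos {T : GrowingTree} {v : T.V} (h : v ≠ T.root) : 0 < T.depth v :=
  Nat.pos_of_ne_zero (fun h0 => h (depth_eq_zero.mp h0))

lemma depth_parent {T : GrowingTree} {v : T.V} (h : v ≠ T.root) :
    T.depth (T.parent v) + 1 = T.depth v := by
  have hpos := depth_pos h
  have h1 : T.depth (T.parent v) ≤ T.depth v - 1 := by
    apply Nat.find_le
    have := T.iterate_depth v
    rwa [show T.depth v = (T.depth v - 1) + 1 from (Nat.succ_pred_eq_of_pos hpos).symm,
      Function.iterate_succ_apply] at this
  have h2 : T.depth v ≤ T.depth (T.parent v) + 1 := by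
    apply Nat.find_le
    rw [Function.iterate_succ_apply]
    exact T.iterate_depth (T.parent v)
  omega

lemma depth_parent_lt {T : GrowingTree} {v : T.V} (h : v ≠ T.root) :
    T.depth (T.parent v) < T.depth v := by
  have := depth_parent h; omega

lemma depth_of_mem_children {T : GrowingTree} {v w : T.V} (h : w ∈ T.children v) :
    T.depth w = T.depth v + 1 := by
  obtain ⟨h1, h2⟩ := mem_children.mp h
  rw [← depth_parent h2, h1]

/-! ### tsum helpers -/

lemma tsum_subtype_mono' {V : Type} (f : V → ℝ≥0∞) {A B : Set V} (h : A ⊆ B) :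
    ∑' x : A, f x ≤ ∑' x : B, f x := by
  rw [tsum_subtype, tsum_subtype]
  exact ENNReal.tsum_le_tsum (Set.indicator_le_indicator_of_subset h (fun _ => zero_le))

lemma tsum_biUnion_le' {V ι : Type} (f : V → ℝ≥0∞) (s : Finset ι) (A : ι → Set V) :
    ∑' x : (⋃ i ∈ s, A i), f x ≤ ∑ i ∈ s, ∑' x : A i, f x := by
  rw [tsum_subtype]
  have hpt : ∀ x, (⋃ i ∈ s, A i).indicator f x ≤ ∑ i ∈ s, (A i).indicator f x := by
    intro x
    by_cases hx : x ∈ ⋃ i ∈ s, A i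
    · obtain ⟨i, hi, hxi⟩ := Set.mem_iUnion₂.mp hx
      rw [Set.indicator_of_mem hx]
      calc f x = (A i).indicator f x := (Set.indicator_of_mem hxi f).symm
        _ ≤ ∑ i ∈ s, (A i).indicator f x :=
          Finset.single_le_sum (f := fun i => (A i).indicator f x) (fun _ _ => zero_le) hi
    · rw [Set.indicator_of_notMem hx]; exact zero_le
  calc ∑' x, (⋃ i ∈ s, A i).indicator f x ≤ ∑' x, ∑ i ∈ s, (A i).indicator f x :=
        ENNReal.tsum_le_tsum hpt
    _ = ∑ i ∈ s, ∑' x, (A i).indicator f x := Summable.tsum_finsetSum (fun _ _ => ENNReal.summable)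
    _ = ∑ i ∈ s, ∑' x : A i, f x := by simp [tsum_subtype]

/-! ### Minimal cutset capacity below a vertex -/

/-- `s` is an infinite descending path starting at `v`. -/
def IsPath (v : T.V) (s : ℕ → T.V) : Prop :=
  s 0 = v ∧ ∀ n, T.parent (s (n + 1)) = s n ∧ s (n + 1) ≠ T.root

/-- `C` cuts every infinite path from `v`. -/
def Cuts (v : T.V) (C : Set T.V) : Prop :=
  ∀ s : ℕ → T.V, T.IsPath v s → ∃ n, s n ∈ C

/-- Minimal cutset capacity below `v`. -/
noncomputable def mcap (κ : T.V → ℝ≥0) (v : T.V) : ℝ≥0∞ :=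
  ⨅ (C : Set T.V) (_ : T.Cuts v C), ∑' x : C, (κ x.1 : ℝ≥0∞)

lemma mcap_le {T : GrowingTree} {κ : T.V → ℝ≥0} {v : T.V} {C : Set T.V} (h : T.Cuts v C) :
    T.mcap κ v ≤ ∑' x : C, (κ x.1 : ℝ≥0∞) := iInf₂_le C h

lemma cuts_singleton (v : T.V) : T.Cuts v {v} := by
  intro s hs
  exact ⟨0, by rw [hs.1]; exact rfl⟩

lemma mcap_le_kappa (κ : T.V → ℝ≥0) (v : T.V) : T.mcap κ v ≤ (κ v : ℝ≥0∞) := by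
  refine le_trans (mcap_le (T.cuts_singleton v)) ?_
  rw [tsum_singleton v (fun x => (κ x : ℝ≥0∞))]

lemma mcap_ne_top (κ : T.V → ℝ≥0) (v : T.V) : T.mcap κ v ≠ ⊤ :=
  fun h => by simpa [h] using T.mcap_le_kappa κ v

lemma exists_cut_lt {T : GrowingTree} {κ : T.V → ℝ≥0} {v : T.V} {t : ℝ≥0∞}
    (h : T.mcap κ v < t) : ∃ C : Set T.V, T.Cuts v C ∧ ∑' x : C, (κ x.1 : ℝ≥0∞) < t := by
  obtain ⟨C, hC⟩ := iInf_lt_iff.mp h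
  obtain ⟨hc, hlt⟩ := iInf_lt_iff.mp hC
  exact ⟨C, hc, hlt⟩

/-- Near-optimal cutsets for each child, giving a cutset (avoiding the root) for paths
from each child. -/
lemma exists_children_cutsets {T : GrowingTree} (κ : T.V → ℝ≥0) (v : T.V) {ε : ℝ≥0}
    (hε : 0 < ε) :
    ∃ A : T.V → Set T.V,
      (∀ w, w ∈ T.children v → T.Cuts w (A w)) ∧
      ∑ w ∈ T.children v, ∑' x : A w, (κ x.1 : ℝ≥0∞)
        ≤ (∑ w ∈ T.children v, T.mcap κ w) + ε := by
  set n := (T.children v).card with hn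
  set ε' : ℝ≥0 := ε / (n + 1) with hε'def
  have hε' : (0 : ℝ≥0) < ε' := by positivity
  have hch : ∀ w, ∃ C, w ∈ T.children v →
      T.Cuts w C ∧ ∑' x : C, (κ x.1 : ℝ≥0∞) < T.mcap κ w + ε' := by
    intro w
    by_cases hw : w ∈ T.children v
    · obtain ⟨C, hC1, hC2⟩ := exists_cut_lt (κ := κ) (v := w)
        (ENNReal.lt_add_right (T.mcap_ne_top κ w) (show (ε' : ℝ≥0∞) ≠ 0 by exact_mod_cast hε'.ne'))
      exact ⟨C, fun _ => ⟨hC1, hC2⟩⟩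
    · exact ⟨∅, fun h => absurd h hw⟩
  choose A hA using hch
  refine ⟨A, fun w hw => (hA w hw).1, ?_⟩
  have hle : ∑ w ∈ T.children v, ∑' x : A w, (κ x.1 : ℝ≥0∞)
      ≤ ∑ w ∈ T.children v, (T.mcap κ w + (ε' : ℝ≥0∞)) :=
    Finset.sum_le_sum (fun w hw => ((hA w hw).2).le)
  refine hle.trans ?_
  rw [Finset.sum_add_distrib, Finset.sum_const, nsmul_eq_mul]
  refine add_le_add le_rfl ?_
  have harith : (n : ℝ≥0) * ε' ≤ ε := by
    calc (n : ℝ≥0) * ε' ≤ ((n : ℝ≥0) + 1) * ε' := by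
          exact mul_le_mul_left (le_add_of_nonneg_right zero_le_one) ε'
      _ = ε := by
          rw [hε'def, mul_comm, div_mul_cancel₀]
          positivity
  calc ((n : ℕ) : ℝ≥0∞) * (ε' : ℝ≥0∞) = (((n : ℝ≥0) * ε' : ℝ≥0) : ℝ≥0∞) := by
        push_cast; ring
    _ ≤ (ε : ℝ≥0∞) := by exact_mod_cast harith

lemma mcap_le_sum (κ : T.V → ℝ≥0) (v : T.V) :
    T.mcap κ v ≤ ∑ w ∈ T.children v, T.mcap κ w := by
  refine ENNReal.le_of_forall_pos_le_add (fun ε hε _ => ?_)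
  obtain ⟨A, hcut, hsum⟩ := exists_children_cutsets κ v hε
  refine le_trans (mcap_le (T := T) (v := v) (C := ⋃ w ∈ T.children v, A w) ?_)
    (le_trans (tsum_biUnion_le' (fun x => (κ x : ℝ≥0∞)) (T.children v) A) hsum)
  intro s hs
  have h0 := hs.2 0
  have hmem : s 1 ∈ T.children v := mem_children.mpr ⟨by rw [h0.1, hs.1], h0.2⟩
  obtain ⟨k, hk⟩ := hcut (s 1) hmem (fun n => s (n + 1)) ⟨rfl, fun n => hs.2 (n + 1)⟩
  exact ⟨k + 1, Set.mem_biUnion hmem hk⟩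

lemma iInf_cutsetSum_le_sum_mcap (κ : T.V → ℝ≥0) :
    (⨅ (C : Set T.V) (_ : T.IsCutset C), ∑' x : C, (κ x.1 : ℝ≥0∞))
      ≤ ∑ w ∈ T.children T.root, T.mcap κ w := by
  refine ENNReal.le_of_forall_pos_le_add (fun ε hε _ => ?_)
  obtain ⟨A, hcut, hsum⟩ := exists_children_cutsets κ T.root hε
  set C : Set T.V := (⋃ w ∈ T.children T.root, A w) \ {T.root} with hC
  have hcutset : T.IsCutset C := by
    constructor
    · simp [hC]
    · intro r hr
      have h0 := hr.2 0
      have hmem : r 1 ∈ T.children T.root := mem_children.mpr ⟨by rw [h0.1, hr.1], h0.2⟩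
      obtain ⟨k, hk⟩ := hcut (r 1) hmem (fun n => r (n + 1)) ⟨rfl, fun n => hr.2 (n + 1)⟩
      exact ⟨k, Set.mem_diff_singleton.mpr ⟨Set.mem_biUnion hmem hk, (hr.2 k).2⟩⟩
  refine le_trans (iInf₂_le C hcutset) ?_
  rw [hC]
  exact le_trans (tsum_subtype_mono' (fun x => (κ x : ℝ≥0∞)) Set.diff_subset)
    (le_trans (tsum_biUnion_le' (fun x => (κ x : ℝ≥0∞)) (T.children T.root) A) hsum)

end GrowingTree
end Aux
section Flow
open scoped ENNReal NNReal Classical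

namespace GrowingTree
variable (T : GrowingTree)

noncomputable def flowS (M : T.V → ℝ≥0) (v : T.V) : ℝ≥0 := ∑ w ∈ T.children v, M w

noncomputable def flow (M : T.V → ℝ≥0) (a : ℝ≥0) (v : T.V) : ℝ≥0 :=
  if h : v = T.root then a
  else flow M a (T.parent v) * M v / T.flowS M (T.parent v)
termination_by T.depth v
decreasing_by exact depth_parent_lt h

lemma flow_root (M : T.V → ℝ≥0) (a : ℝ≥0) : T.flow M a T.root = a := by
  rw [flow, dif_pos rfl]

lemma M_le_S {T : GrowingTree} {M : T.V → ℝ≥0} {v w : T.V} (hw : w ∈ T.children v) :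
    M w ≤ T.flowS M v :=
  Finset.single_le_sum (f := fun w => M w) (fun _ _ => zero_le) hw

lemma flow_step {T : GrowingTree} {M : T.V → ℝ≥0} {a : ℝ≥0} {v w : T.V}
    (hw : w ∈ T.children v) (hv : T.flow M a v ≤ T.flowS M v) :
    T.flow M a w = T.flow M a v * M w / T.flowS M v ∧ T.flow M a w ≤ M w := by
  obtain ⟨hp, hr⟩ := mem_children.mp hw
  have heq : T.flow M a w = T.flow M a v * M w / T.flowS M v := by
    rw [flow, dif_neg hr, hp]
  refine ⟨heq, ?_⟩
  by_cases hS : T.flowS M v = 0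
  · have hM0 : M w = 0 := le_antisymm (hS ▸ M_le_S hw) zero_le
    simp [heq, hM0]
  · rw [heq]
    calc T.flow M a v * M w / T.flowS M v ≤ T.flowS M v * M w / T.flowS M v := by gcongr
      _ = M w := by rw [mul_comm, mul_div_assoc, div_self hS, mul_one]

lemma flow_le_S {T : GrowingTree} {M : T.V → ℝ≥0} {a : ℝ≥0}
    (hbase : a ≤ T.flowS M T.root) (hM : ∀ w, w ≠ T.root → M w ≤ T.flowS M w) :
    ∀ v, T.flow M a v ≤ T.flowS M v := by
  suffices h : ∀ d, ∀ v, T.depth v = d → T.flow M a v ≤ T.flowS M v from fun v => h _ v rfl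
  intro d
  induction d using Nat.strong_induction_on with
  | _ d ih =>
    intro v hv
    by_cases hr : v = T.root
    · subst hr; rw [T.flow_root]; exact hbase
    · have hw : v ∈ T.children (T.parent v) := mem_children.mpr ⟨rfl, hr⟩
      have hpar : T.flow M a (T.parent v) ≤ T.flowS M (T.parent v) :=
        ih (T.depth (T.parent v)) (hv ▸ depth_parent_lt hr) _ rfl
      exact le_trans (flow_step hw hpar).2 (hM v hr)

lemma flow_le_M {T : GrowingTree} {M : T.V → ℝ≥0} {a : ℝ≥0}
    (hbase : a ≤ T.flowS M T.root) (hM : ∀ w, w ≠ T.root → M w ≤ T.flowS M w)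
    {v : T.V} (hv : v ≠ T.root) : T.flow M a v ≤ M v := by
  have hw : v ∈ T.children (T.parent v) := mem_children.mpr ⟨rfl, hv⟩
  exact (flow_step hw (flow_le_S hbase hM (T.parent v))).2

lemma flow_isFlow {T : GrowingTree} {M : T.V → ℝ≥0} {a : ℝ≥0}
    (hbase : a ≤ T.flowS M T.root) (hM : ∀ w, w ≠ T.root → M w ≤ T.flowS M w) :
    T.IsFlow (T.flow M a) := by
  intro v
  have hv : T.flow M a v ≤ T.flowS M v := flow_le_S hbase hM v
  have hsum : ∑ w ∈ T.children v, T.flow M a w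
      = ∑ w ∈ T.children v, T.flow M a v * M w / T.flowS M v :=
    Finset.sum_congr rfl (fun w hw => (flow_step hw hv).1)
  by_cases hS : T.flowS M v = 0
  · have h0 : T.flow M a v = 0 := le_antisymm (hS ▸ hv) zero_le
    rw [h0, hsum, h0]
    simp
  · rw [hsum]
    simp only [div_eq_mul_inv, mul_assoc, ← Finset.mul_sum, ← Finset.sum_mul]
    rw [show (∑ w ∈ T.children v, M w) = T.flowS M v from rfl, mul_inv_cancel₀ hS, mul_one]

/-! ### Levels -/

noncomputable def level : ℕ → Finset T.V
  | 0 => {T.root}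
  | n + 1 => (level n).biUnion T.children

lemma mem_level {T : GrowingTree} {v : T.V} : ∀ {n : ℕ}, v ∈ T.level n ↔ T.depth v = n := by
  intro n
  induction n generalizing v with
  | zero => simp [level, depth_eq_zero]
  | succ n ih =>
    simp only [level, Finset.mem_biUnion]
    constructor
    · rintro ⟨u, hu, hv⟩
      rw [depth_of_mem_children hv, ih.mp hu]
    · intro hv
      have hr : v ≠ T.root := by
        intro h; rw [h] at hv; simp [depth_eq_zero.mpr rfl] at hv
      refine ⟨T.parent v, ih.mpr ?_, mem_children.mpr ⟨rfl, hr⟩⟩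
      have := depth_parent hr
      omega

lemma sum_level_flow {T : GrowingTree} {θ : T.V → ℝ≥0} (hθ : T.IsFlow θ) :
    ∀ n, ∑ v ∈ T.level n, θ v = θ T.root := by
  intro n
  induction n with
  | zero => simp [level]
  | succ n ih =>
    rw [level, Finset.sum_biUnion, ← ih]
    · exact Finset.sum_congr rfl (fun u _ => (hθ u).symm)
    · intro u hu u' hu' hne
      refine Finset.disjoint_left.mpr (fun w hw hw' => hne ?_)
      rw [← (mem_children.mp hw).1, ← (mem_children.mp hw').1]

lemma sum_le_strength {T : GrowingTree} {θ : T.V → ℝ≥0} (hθ : T.IsFlow θ) {n : ℕ}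
    {G : Finset T.V} (hG : ∀ x ∈ G, T.depth x = n) :
    ∑ v ∈ G, θ v ≤ θ T.root := by
  rw [← sum_level_flow hθ n]
  exact Finset.sum_le_sum_of_subset (fun x hx => mem_level.mpr (hG x hx))

end GrowingTree
end Flow

open GrowingTree


/-- If the simple random walk on a locally finite infinite rooted tree is recurrent
(equivalently, by the energy criterion, every finite-energy flow from the root to infinity
is zero), then for every summable sequence `(ωₙ)` of positive reals the infimum over
cutsets `Π` of `Σ_{e ∈ Π} ω_{|e|}` is zero. -/
theorem iInf_cutsetSum_eq_zero_of_recurrent (T : GrowingTree) (hinf : Infinite T.V)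
    (hrec : ∀ θ : T.V → ℝ≥0, T.IsFlow θ → T.energy θ < ⊤ → T.strength θ = 0)
    (ω : ℕ → ℝ) (hω : ∀ n, 0 < ω n) (hsum : Summable ω) :
    (⨅ (C : Set T.V) (_ : T.IsCutset C),
      ∑' v : C, ENNReal.ofReal (ω (T.depth v.1 - 1))) = 0 := by
  by_contra h0
  set κ : T.V → ℝ≥0 := fun v => (ω (T.depth v - 1)).toNNReal with hκ
  have hgoal : (⨅ (C : Set T.V) (_ : T.IsCutset C),
      ∑' v : C, ENNReal.ofReal (ω (T.depth v.1 - 1)))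
      = ⨅ (C : Set T.V) (_ : T.IsCutset C), ∑' v : C, (κ v.1 : ℝ≥0∞) := rfl
  rw [hgoal] at h0
  have hle := T.iInf_cutsetSum_le_sum_mcap κ
  have hS0 : (∑ w ∈ T.children T.root, T.mcap κ w) ≠ 0 := by
    intro h
    exact h0 (le_antisymm (hle.trans h.le) zero_le)
  set M : T.V → ℝ≥0 := fun v => (T.mcap κ v).toNNReal with hM
  have hMcoe : ∀ v, (M v : ℝ≥0∞) = T.mcap κ v := fun v => ENNReal.coe_toNNReal (T.mcap_ne_top κ v)
  have hScoe : ∀ v, ((T.flowS M v : ℝ≥0) : ℝ≥0∞) = ∑ w ∈ T.children v, T.mcap κ w := by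
    intro v
    rw [show T.flowS M v = ∑ w ∈ T.children v, M w from rfl, ENNReal.coe_finset_sum]
    exact Finset.sum_congr rfl fun w _ => hMcoe w
  set a : ℝ≥0 := T.flowS M T.root with ha
  have haa : a ≠ 0 := by
    intro h
    apply hS0
    have h1 := hScoe T.root
    rw [← ha, h] at h1
    simpa using h1.symm
  have hMle : ∀ w, w ≠ T.root → M w ≤ T.flowS M w := by
    intro w _
    rw [← ENNReal.coe_le_coe, hMcoe, hScoe]
    exact T.mcap_le_sum κ w
  have hbase : a ≤ T.flowS M T.root := le_of_eq ha
  set θ := T.flow M a with hθ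
  have hflow : T.IsFlow θ := flow_isFlow hbase hMle
  have hθcap : ∀ v, v ≠ T.root → (θ v : ℝ≥0∞) ≤ ENNReal.ofReal (ω (T.depth v - 1)) := by
    intro v hv
    calc (θ v : ℝ≥0∞) ≤ (M v : ℝ≥0∞) := ENNReal.coe_le_coe.mpr (flow_le_M hbase hMle hv)
      _ = T.mcap κ v := hMcoe v
      _ ≤ (κ v : ℝ≥0∞) := T.mcap_le_kappa κ v
      _ = ENNReal.ofReal (ω (T.depth v - 1)) := rfl
  have hωsum : (∑' n, ENNReal.ofReal (ω n)) ≠ ⊤ := by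
    rw [← ENNReal.ofReal_tsum_of_nonneg (fun n => (hω n).le) hsum]
    exact ENNReal.ofReal_ne_top
  have hen : T.energy θ < ⊤ := by
    have hB : T.energy θ ≤ (∑' n, ENNReal.ofReal (ω n)) * (a : ℝ≥0∞) := by
      refine Summable.tsum_le_of_sum_le ENNReal.summable ?_
      intro F
      set G : Finset T.V := F.image Subtype.val with hG
      have hGne : ∀ x ∈ G, x ≠ T.root := by
        intro x hx
        obtain ⟨y, hy, rfl⟩ := Finset.mem_image.mp hx
        exact y.2
      have h1 : ∑ x ∈ F, ((θ x.1 : ℝ≥0∞)) ^ 2 = ∑ x ∈ G, ((θ x : ℝ≥0∞)) ^ 2 := by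
        rw [hG]
        exact (Finset.sum_image (s := F) (g := Subtype.val) (f := fun x => ((θ x : ℝ≥0∞)) ^ 2)
          (fun x _ y _ h => Subtype.ext h)).symm
      rw [h1]
      have h2 : ∑ x ∈ G, ((θ x : ℝ≥0∞)) ^ 2
          ≤ ∑ x ∈ G, (θ x : ℝ≥0∞) * ENNReal.ofReal (ω (T.depth x - 1)) := by
        refine Finset.sum_le_sum (fun x hx => ?_)
        rw [sq]
        exact mul_le_mul_right (hθcap x (hGne x hx)) _
      refine le_trans h2 ?_
      set N := G.sup T.depth with hN
      have hmaps : ∀ x ∈ G, T.depth x - 1 ∈ Finset.range N := by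
        intro x hx
        rw [Finset.mem_range]
        have h1' : 0 < T.depth x := depth_pos (hGne x hx)
        have h2' : T.depth x ≤ N := Finset.le_sup hx
        omega
      rw [← Finset.sum_fiberwise_of_maps_to hmaps
        (fun x => (θ x : ℝ≥0∞) * ENNReal.ofReal (ω (T.depth x - 1)))]
      have hinner : ∀ n ∈ Finset.range N,
          ∑ x ∈ G.filter (fun x => T.depth x - 1 = n),
            (θ x : ℝ≥0∞) * ENNReal.ofReal (ω (T.depth x - 1))
          ≤ ENNReal.ofReal (ω n) * (a : ℝ≥0∞) := by
        intro n _
        set G' := G.filter (fun x => T.depth x - 1 = n) with hG'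
        have hdepth : ∀ x ∈ G', T.depth x = n + 1 := by
          intro x hx
          have h3 := (Finset.mem_filter.mp hx).2
          have h4 : 0 < T.depth x := depth_pos (hGne x (Finset.mem_filter.mp hx).1)
          omega
        have hcongr : ∑ x ∈ G', (θ x : ℝ≥0∞) * ENNReal.ofReal (ω (T.depth x - 1))
            = ∑ x ∈ G', (θ x : ℝ≥0∞) * ENNReal.ofReal (ω n) := by
          refine Finset.sum_congr rfl (fun x hx => ?_)
          rw [(Finset.mem_filter.mp hx).2]
        rw [hcongr, ← Finset.sum_mul]
        have hlev : ∑ x ∈ G', (θ x : ℝ≥0∞) ≤ (a : ℝ≥0∞) := by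
          rw [← ENNReal.coe_finset_sum]
          refine ENNReal.coe_le_coe.mpr ?_
          have hsl := sum_le_strength hflow hdepth
          rwa [hθ, T.flow_root] at hsl
        rw [mul_comm]
        exact mul_le_mul_right hlev _
      refine le_trans (Finset.sum_le_sum hinner) ?_
      rw [← Finset.sum_mul]
      exact mul_le_mul_left (ENNReal.sum_le_tsum _) _
    exact lt_of_le_of_lt hB (ENNReal.mul_lt_top hωsum.lt_top ENNReal.coe_lt_top)
  have hz : T.strength θ = 0 := hrec θ hflow hen
  have hfin : a = 0 := by
    rw [← T.flow_root M a]
    exact hz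
  exact haa hfin
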